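/- Let G and H be non-trivial groups and let H act faithfully on a set X such that H_X is of torsion-type. If H is finitely invariably generated and G is invariably generated but not finitely invariably generated, then the wreath product G ≀_X H is invariably generated but not finitely invariably generated. -/

import Mathlib

open Function SemidirectProduct

/-- A subset `S` invariably generates `K` if replacing each element of `S` by an
arbitrary conjugate always yields a generating set of `K`. -/
def InvariablyGenerates (K : Type*) [Group K] (S : Set K) : Prop :=
  ∀ a : K → K, Subgroup.closure ((fun s => (a s)⁻¹ * s * a s) '' S) = ⊤

/-- `K` is invariably generated if `K` invariably generates itself. -/
def IsIG (K : Type*) [Group K] : Prop :=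
  InvariablyGenerates K Set.univ

/-- `K` is finitely invariably generated if some finite subset invariably generates it. -/
def IsFIG (K : Type*) [Group K] : Prop :=
  ∃ S : Set K, S.Finite ∧ InvariablyGenerates K S

/-- The base of the wreath product `G ≀_X H`: the restricted direct product
`⨁_{x ∈ X} G`, realized as the finitely supported functions `X → G`. -/
def WreathBase (G X : Type*) [Group G] : Subgroup (X → G) where
  carrier := {f | (mulSupport f).Finite}
  one_mem' := by simp
  mul_mem' {f g} hf hg := (Set.Finite.union hf hg).subset (mulSupport_mul f g)
  inv_mem' {f} hf := by simpa using hf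

lemma mem_wreathBase {G X : Type*} [Group G] {f : X → G} :
    f ∈ WreathBase G X ↔ (mulSupport f).Finite := Iff.rfl

/-- The permutation action of `H` on the base, `(h • f) x = f (h⁻¹ • x)`, so that in the
wreath product conjugation by `h` (i.e. `h · g^{(x)} · h⁻¹`) sends the coordinate subgroup
`G_x` to `G_{h • x}`; equivalently `h⁻¹ · g^{(x)} · h = g^{(h⁻¹ • x)}`, which is the
left-action rendering of "conjugation multiplies indices on the right". -/
def wreathAut (G H X : Type*) [Group G] [Group H] [MulAction H X] :
    H →* MulAut (WreathBase G X) where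
  toFun h :=
    { toFun := fun f => ⟨fun x => (f : X → G) (h⁻¹ • x),
        mem_wreathBase.mpr (((mem_wreathBase.mp f.2).image (h • ·)).subset
          fun x hx => ⟨h⁻¹ • x, hx, by simp⟩)⟩
      invFun := fun f => ⟨fun x => (f : X → G) (h • x),
        mem_wreathBase.mpr (((mem_wreathBase.mp f.2).image (h⁻¹ • ·)).subset
          fun x hx => ⟨h • x, hx, by simp⟩)⟩
      left_inv := fun f => Subtype.ext (funext fun x => by simp)
      right_inv := fun f => Subtype.ext (funext fun x => by simp)
      map_mul' := fun f g => Subtype.ext (funext fun x => by simp) }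
  map_one' := by
    ext f x
    simp
  map_mul' h₁ h₂ := by
    ext f x
    simp [mul_smul]

/-- The restricted wreath product `G ≀_X H`. -/
abbrev WreathProduct (G H X : Type*) [Group G] [Group H] [MulAction H X] :=
  WreathBase G X ⋊[wreathAut G H X] H

open scoped Classical in
/-- `g^{(y)}`: the element of the base which is `g` in coordinate `y` and trivial elsewhere. -/
noncomputable def WreathBase.single {G : Type*} (X : Type*) [Group G] (y : X) :
    G →* WreathBase G X where
  toFun g := ⟨fun x => if x = y then g else 1,
    mem_wreathBase.mpr ((Set.finite_singleton y).subset fun x hx => by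
      by_contra hxy
      exact hx (if_neg hxy))⟩
  map_one' := Subtype.ext (funext fun x => by simp)
  map_mul' g₁ g₂ := Subtype.ext (funext fun x => by by_cases h : x = y <;> simp [h])

/-- The embedding of `G` onto the coordinate subgroup `G_y` of the wreath product. -/
noncomputable def coordHom (G H : Type*) {X : Type*} [Group G] [Group H] [MulAction H X]
    (y : X) : G →* WreathProduct G H X :=
  SemidirectProduct.inl.comp (WreathBase.single X y)

/-- `H_X` is of torsion-type if there is `y ∈ X` such that for every `x` in the `H`-orbit
of `y` and every `k ∈ H`, the `⟨k⟩`-orbit of `x` is finite. -/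
def IsTorsionType (H X : Type*) [Group H] [MulAction H X] : Prop :=
  ∃ y : X, ∀ x ∈ MulAction.orbit H y, ∀ k : H, (Set.range fun n : ℤ => k ^ n • x).Finite

/-- A `Γ_z`-set: a set of base elements containing, for every `g ∈ G`, an element whose
coordinate at `z` is `g`. -/
def IsGammaSet {G X : Type*} [Group G] (z : X) (Γ : Set (WreathBase G X)) : Prop :=
  ∀ g : G, ∃ f ∈ Γ, (f : X → G) z = g

section Helpers

lemma InvariablyGenerates.mono {K : Type*} [Group K] {S S' : Set K} (hss : S ⊆ S')
    (h : InvariablyGenerates K S) : InvariablyGenerates K S' := fun a =>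
  eq_top_iff.2 <| (h a).ge.trans (Subgroup.closure_mono (Set.image_mono hss))

lemma IsFIG.isIG {K : Type*} [Group K] (h : IsFIG K) : IsIG K := by
  obtain ⟨S, -, hS⟩ := h
  exact hS.mono (Set.subset_univ S)

variable {G H X : Type*} [Group G] [Group H] [MulAction H X]

open scoped Classical in
lemma single_apply (y : X) (g : G) (z : X) :
    ((WreathBase.single X y g : WreathBase G X) : X → G) z = if z = y then g else 1 := by
  rfl

lemma wreathAut_apply (k : H) (f : WreathBase G X) (z : X) :
    ((wreathAut G H X k f : WreathBase G X) : X → G) z = (f : X → G) (k⁻¹ • z) := rfl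

-- conjugation of a base element by a general element
lemma conj_inl_left (w : WreathProduct G H X) (f : WreathBase G X) (z : X) :
    (((w⁻¹ * SemidirectProduct.inl f * w).left : WreathBase G X) : X → G) z =
      ((w.left : X → G) (w.right • z))⁻¹ * (f : X → G) (w.right • z)
        * (w.left : X → G) (w.right • z) := by
  have hinv : ∀ (k : H) (b : WreathBase G X) (z : X),
      (((wreathAut G H X k)⁻¹ b : WreathBase G X) : X → G) z = (b : X → G) (k • z) := by
    intro k b z
    rw [← map_inv (wreathAut G H X), wreathAut_apply, inv_inv]
  simp only [hinv, SemidirectProduct.mul_left, SemidirectProduct.mul_right,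
    SemidirectProduct.inv_left, SemidirectProduct.inv_right, SemidirectProduct.left_inl,
    SemidirectProduct.right_inl, map_one, mul_one, map_mul, map_inv, MulAut.one_apply,
    Subgroup.coe_mul, Pi.mul_apply, InvMemClass.coe_inv, Pi.inv_apply,
    wreathAut_apply, inv_inv, smul_smul, inv_mul_cancel, one_smul, mul_assoc]

lemma conj_inl_right (w : WreathProduct G H X) (f : WreathBase G X) :
    (w⁻¹ * SemidirectProduct.inl f * w).right = 1 := by simp

end Helpers
section Part1

variable {G H X : Type*} [Group G] [Group H] [MulAction H X]

open SemidirectProduct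

lemma conj_single_of_right_eq_one (v : WreathProduct G H X) (hv : v.right = 1) (x : X) (g : G) :
    v⁻¹ * inl (WreathBase.single X x g) * v =
      inl (WreathBase.single X x (((v.left : X → G) x)⁻¹ * g * (v.left : X → G) x)) := by
  ext
  · -- left components
    show ((_ : WreathBase G X) : X → G) _ = _
    rw [conj_inl_left]
    rw [hv, one_smul]
    rename_i z
    rw [left_inl, single_apply, single_apply]
    by_cases hz : z = x
    · subst hz; simp
    · simp [hz]
  · rw [conj_inl_right]; simp

lemma isIG_wreathProduct (hH : IsIG H) (hG : IsIG G) : IsIG (WreathProduct G H X) := by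
  intro a
  set K := Subgroup.closure ((fun s => (a s)⁻¹ * s * a s) '' Set.univ) with hK
  have hgen : ∀ s : WreathProduct G H X, (a s)⁻¹ * s * a s ∈ K :=
    fun s => Subgroup.subset_closure ⟨s, Set.mem_univ s, rfl⟩
  have hmap : K.map (rightHom : WreathProduct G H X →* H) = ⊤ := by
    rw [eq_top_iff, ← hH (fun h => (a (inr h)).right)]
    refine (Subgroup.closure_le _).2 ?_
    rintro _ ⟨h, -, rfl⟩
    refine ⟨(a (inr h))⁻¹ * inr h * a (inr h), hgen _, ?_⟩
    simp [rightHom]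
  have hlift : ∀ k : H, ∃ u ∈ K, (u : WreathProduct G H X).right = k := by
    intro k
    have : k ∈ K.map (rightHom : WreathProduct G H X →* H) := by rw [hmap]; trivial
    obtain ⟨u, hu, hur⟩ := this
    exact ⟨u, hu, hur⟩
  have hsingle : ∀ (x : X) (g : G), inl (WreathBase.single X x g) ∈ K := by
    intro x g0
    have key : ∀ g : G, ∃ b : G,
        inl (WreathBase.single X x (b⁻¹ * g * b)) ∈ K := by
      intro g
      set w : WreathProduct G H X := inl (WreathBase.single X x g) with hw
      obtain ⟨u, hu, hur⟩ := hlift ((a w).right)⁻¹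
      have hmem : u⁻¹ * ((a w)⁻¹ * w * a w) * u ∈ K :=
        mul_mem (mul_mem (inv_mem hu) (hgen w)) hu
      set v := a w * u with hv
      have hvr : v.right = 1 := by
        rw [hv, mul_right, hur, mul_inv_cancel]
      have heq : u⁻¹ * ((a w)⁻¹ * w * a w) * u = v⁻¹ * w * v := by
        rw [hv]; group
      rw [heq, hw, conj_single_of_right_eq_one v hvr] at hmem
      exact ⟨(v.left : X → G) x, hmem⟩
    choose b hb using key
    have hL : Subgroup.comap (coordHom G H x) K = ⊤ := by
      rw [eq_top_iff, ← hG b]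
      refine (Subgroup.closure_le _).2 ?_
      rintro _ ⟨g, -, rfl⟩
      exact hb g
    have : g0 ∈ Subgroup.comap (coordHom G H x) K := by rw [hL]; trivial
    exact this
  have hbase : ∀ f : WreathBase G X, inl f ∈ K := by
    have main : ∀ (F : Finset X) (f : WreathBase G X),
        mulSupport (f : X → G) ⊆ F → inl f ∈ K := by
      classical
      intro F
      induction F using Finset.induction_on with
      | empty =>
        intro f hf
        have : f = 1 := by
          ext z
          by_contra hz
          exact absurd (hf hz) (by simp)
        rw [this, map_one]
        exact one_mem K
      | @insert x F hx ih =>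
        intro f hf
        set f' : WreathBase G X := (WreathBase.single X x ((f : X → G) x))⁻¹ * f with hf'
        have hsupp : mulSupport (f' : X → G) ⊆ F := by
          intro z hz
          have hz' : (f' : X → G) z ≠ 1 := hz
          have hzx : z ≠ x := by
            intro h
            subst h
            apply hz'
            show ((WreathBase.single X z ((f : X → G) z))⁻¹ : WreathBase G X).1 z
              * (f : X → G) z = 1
            have : (((WreathBase.single X z ((f : X → G) z)) : WreathBase G X) : X → G) z
                = (f : X → G) z := by rw [single_apply, if_pos rfl]
            show ((((WreathBase.single X z ((f : X → G) z)) : WreathBase G X) : X → G) z)⁻¹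
              * (f : X → G) z = 1
            rw [this, inv_mul_cancel]
          have hzf : z ∈ mulSupport (f : X → G) := by
            by_contra hzf
            apply hz'
            show ((((WreathBase.single X x ((f : X → G) x)) : WreathBase G X) : X → G) z)⁻¹
              * (f : X → G) z = 1
            rw [single_apply, if_neg hzx, notMem_mulSupport.1 hzf]
            simp
          rcases Finset.mem_insert.1 (hf hzf) with h | h
          · exact absurd h hzx
          · exact h
        have : f = WreathBase.single X x ((f : X → G) x) * f' := by
          rw [hf']; group
        rw [this, map_mul]
        exact mul_mem (hsingle x _) (ih f' hsupp)
    intro f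
    exact main (mem_wreathBase.1 f.2).toFinset f (by simp)
  rw [eq_top_iff]
  intro w _
  obtain ⟨u, hu, hur⟩ := hlift w.right
  have hwu : (w * u⁻¹).right = 1 := by
    rw [mul_right, inv_right, hur, mul_inv_cancel]
  have : w * u⁻¹ = inl ((w * u⁻¹).left) := by
    conv_lhs => rw [← inl_left_mul_inr_right (w * u⁻¹)]
    rw [hwu, map_one, mul_one]
  have hmem : w * u⁻¹ ∈ K := this ▸ hbase _
  have := mul_mem hmem hu
  simpa using this

end Part1
section Orbits

variable {H X : Type*} [Group H] [MulAction H X]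

/-- The orbit equivalence relation of the cyclic group generated by `h`. -/
def hrel (h : H) : Setoid X :=
  ⟨fun z w => ∃ n : ℤ, h ^ n • z = w,
   ⟨fun z => ⟨0, by simp⟩,
    fun {z w} ⟨n, hn⟩ => ⟨-n, by rw [← hn, smul_smul, ← zpow_add, neg_add_cancel, zpow_zero, one_smul]⟩,
    fun {z w v} ⟨n, hn⟩ ⟨m, hm⟩ => ⟨m + n, by rw [← hm, ← hn, smul_smul, ← zpow_add]⟩⟩⟩

/-- A representative of the `⟨h⟩`-orbit of `z`. -/
noncomputable def hrep (h : H) (z : X) : X :=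
  Quotient.out (Quotient.mk (hrel h) z)

lemma hrep_spec (h : H) (z : X) : ∃ n : ℤ, h ^ n • hrep h z = z := by
  have h1 : Quotient.mk (hrel h) (hrep h z) = Quotient.mk (hrel h) z :=
    Quotient.out_eq _
  exact Quotient.exact h1

lemma hrep_congr (h : H) {z w : X} (n : ℤ) (hn : h ^ n • z = w) :
    hrep h z = hrep h w := by
  have : Quotient.mk (hrel h) z = Quotient.mk (hrel h) w := Quotient.sound ⟨n, hn⟩
  rw [hrep, hrep, this]

lemma exists_pos_period {h : H} {x : X}
    (hfin : (Set.range fun n : ℤ => h ^ n • x).Finite) :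
    ∃ d : ℕ, 0 < d ∧ h ^ (d : ℤ) • x = x := by
  have hni : ¬ Function.Injective (fun n : ℤ => h ^ n • x) :=
    fun hinj => (Set.infinite_range_of_injective hinj) hfin
  obtain ⟨m, n, hmn, hne⟩ := Function.not_injective_iff.1 hni
  have key : h ^ (m - n) • x = x := by
    have h1 : h ^ (-n) • h ^ m • x = h ^ (-n) • h ^ n • x := by rw [hmn]
    rw [smul_smul, smul_smul, ← zpow_add, ← zpow_add, neg_add_cancel, zpow_zero, one_smul] at h1
    have h2 : m - n = -n + m := by ring
    rw [h2]
    exact h1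
  refine ⟨(m - n).natAbs, Int.natAbs_pos.2 (sub_ne_zero.2 hne), ?_⟩
  rcases Int.natAbs_eq (m - n) with he | he
  · rw [← he]; exact key
  · have := congrArg (fun w => h ^ ((m - n).natAbs : ℤ) • w) key
    simp only [smul_smul, ← zpow_add] at this
    rw [he] at this
    simpa using this.symm

open scoped Classical in
/-- The (minimal positive) period of `x` under `h`, or `0` if none exists. -/
noncomputable def hperiod (h : H) (x : X) : ℕ :=
  if hex : ∃ d : ℕ, 0 < d ∧ h ^ (d : ℤ) • x = x then Nat.find hex else 0

variable {h : H} {x : X}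

lemma hperiod_spec (hex : ∃ d : ℕ, 0 < d ∧ h ^ (d : ℤ) • x = x) :
    0 < hperiod h x ∧ h ^ ((hperiod h x : ℕ) : ℤ) • x = x := by
  classical
  rw [hperiod, dif_pos hex]
  exact Nat.find_spec hex

lemma hperiod_min (hex : ∃ d : ℕ, 0 < d ∧ h ^ (d : ℤ) • x = x)
    {k : ℕ} (h0 : 0 < k) (hk : k < hperiod h x) : ¬ h ^ (k : ℤ) • x = x := by
  classical
  rw [hperiod, dif_pos hex] at hk
  have := Nat.find_min hex hk
  tauto

lemma smul_hperiod_mul (hex : ∃ d : ℕ, 0 < d ∧ h ^ (d : ℤ) • x = x) (q : ℤ) :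
    h ^ (((hperiod h x : ℕ) : ℤ) * q) • x = x := by
  have h1 : h ^ ((hperiod h x : ℕ) : ℤ) ∈ MulAction.stabilizer H x :=
    (hperiod_spec hex).2
  have h2 := zpow_mem h1 q
  rw [← zpow_mul] at h2
  exact h2

lemma index_exists (hex : ∃ d : ℕ, 0 < d ∧ h ^ (d : ℤ) • x = x) {z : X}
    (hz : ∃ n : ℤ, h ^ n • x = z) :
    ∃ i : ℕ, i < hperiod h x ∧ h ^ (-(i : ℤ)) • x = z := by
  obtain ⟨n, rfl⟩ := hz
  set d : ℤ := ((hperiod h x : ℕ) : ℤ) with hd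
  have hdpos : (0 : ℤ) < d := by rw [hd]; exact_mod_cast (hperiod_spec hex).1
  set r : ℤ := (-n) % d with hr
  have hr0 : 0 ≤ r := Int.emod_nonneg _ (ne_of_gt hdpos)
  have hrd : r < d := Int.emod_lt_of_pos _ hdpos
  refine ⟨r.toNat, ?_, ?_⟩
  · exact_mod_cast (Int.toNat_lt' (by exact_mod_cast (hperiod_spec hex).1)).2 hrd
  · have htn : ((r.toNat : ℕ) : ℤ) = r := Int.toNat_of_nonneg hr0
    rw [htn]
    have hdef : r = -n - d * ((-n) / d) := by
      rw [hr, Int.emod_def]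
    have : -r = n + d * ((-n) / d) := by omega
    rw [this, zpow_add, mul_smul, smul_hperiod_mul hex]

lemma index_unique (hex : ∃ d : ℕ, 0 < d ∧ h ^ (d : ℤ) • x = x) {i j : ℕ}
    (hi : i < hperiod h x) (hj : j < hperiod h x)
    (hij : h ^ (-(i : ℤ)) • x = h ^ (-(j : ℤ)) • x) : i = j := by
  wlog hle : i ≤ j generalizing i j
  · exact (this hj hi hij.symm (le_of_not_ge hle)).symm
  by_contra hne
  have hlt : i < j := lt_of_le_of_ne hle hne
  have key : h ^ ((j - i : ℕ) : ℤ) • x = x := by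
    have := congrArg (fun w => h ^ (j : ℤ) • w) hij
    simp only [smul_smul, ← zpow_add] at this
    have h1 : (j : ℤ) + -(i : ℤ) = ((j - i : ℕ) : ℤ) := by
      push_cast [Nat.cast_sub hle]; ring
    have h2 : (j : ℤ) + -(j : ℤ) = 0 := by ring
    rw [h1, h2, zpow_zero, one_smul] at this
    exact this
  exact hperiod_min hex (by omega) (by omega) key

end Orbits
section Core

variable {G H X : Type*} [Group G] [Group H] [MulAction H X]

open scoped Classical in
/-- The index of `z` in the backwards enumeration `i ↦ h^(-i) • x` of the `⟨h⟩`-orbit of `x`. -/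
noncomputable def hidx (h : H) (x z : X) : ℕ :=
  if hz : ∃ i : ℕ, h ^ (-(i : ℤ)) • x = z then Nat.find hz else 0

lemma hidx_spec {h : H} {x z : X} (hz : ∃ i : ℕ, h ^ (-(i : ℤ)) • x = z) :
    h ^ (-((hidx h x z : ℕ) : ℤ)) • x = z := by
  classical
  rw [hidx, dif_pos hz]
  exact Nat.find_spec hz

lemma hidx_le {h : H} {x z : X} (hz : ∃ i : ℕ, h ^ (-(i : ℤ)) • x = z) {i : ℕ}
    (hi : h ^ (-(i : ℤ)) • x = z) : hidx h x z ≤ i := by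
  classical
  rw [hidx, dif_pos hz]
  exact Nat.find_le hi

lemma hidx_self (h : H) (x : X) : hidx h x x = 0 :=
  Nat.le_zero.1 (hidx_le ⟨0, by simp⟩ (by simp))

/-- The ordered partial product `f x₀ · f (h⁻¹ x₀) ⋯ f (h^{-(i-1)} x₀)`. -/
def eP (f : X → G) (h : H) (x : X) (i : ℕ) : G :=
  ((List.range i).map fun l => f (h ^ (-(l : ℤ)) • x)).prod

lemma eP_zero (f : X → G) (h : H) (x : X) : eP f h x 0 = 1 := rfl

lemma eP_succ (f : X → G) (h : H) (x : X) (i : ℕ) :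
    eP f h x (i + 1) = eP f h x i * f (h ^ (-(i : ℤ)) • x) := by
  simp [eP, List.range_succ]

/-- The product of `f` along the `⟨h⟩`-orbit of `w` (starting at the chosen representative). -/
noncomputable def oprod (f : X → G) (h : H) (w : X) : G :=
  eP f h (hrep h w) (hperiod h (hrep h w))

lemma oprod_congr (f : X → G) (h : H) {z w : X} (n : ℤ) (hn : h ^ n • z = w) :
    oprod f h z = oprod f h w := by
  rw [oprod, oprod, hrep_congr h n hn]

/-- Key construction: a finitely supported conjugating function `c` pushing all the
"cocycle values" of `(f, h)` over the orbit of `y` into `M`. -/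
lemma exists_conjugator (y : X)
    (htor : ∀ x ∈ MulAction.orbit H y, ∀ k : H, (Set.range fun n : ℤ => k ^ n • x).Finite)
    (f : X → G) (hf : (mulSupport f).Finite) (h : H) (M : Subgroup G) (u : G → G)
    (hu : ∀ w ∈ mulSupport f ∩ MulAction.orbit H y,
      (u (oprod f h w))⁻¹ * oprod f h w * u (oprod f h w) ∈ M) :
    ∃ c : X → G, (mulSupport c).Finite ∧
      ∀ x ∈ MulAction.orbit H y, (c x)⁻¹ * f x * c (h⁻¹ • x) ∈ M := by
  classical
  -- the active set
  set Q : X → Prop := fun z => z ∈ MulAction.orbit H y ∧ ∃ n : ℤ, h ^ n • z ∈ mulSupport f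
    with hQ
  set c : X → G := fun z =>
    if Q z then (eP f h (hrep h z) (hidx h (hrep h z) z))⁻¹ * u (oprod f h z) else 1
    with hc
  have hcval : ∀ w : X, Q w →
      c w = (eP f h (hrep h w) (hidx h (hrep h w) w))⁻¹ * u (oprod f h w) := by
    intro w hw
    simp only [hc]
    rw [if_pos hw]
  have hcval' : ∀ w : X, ¬ Q w → c w = 1 := by
    intro w hw
    simp only [hc]
    rw [if_neg hw]
  -- orbit membership facts
  have horb : ∀ (k : H) {z : X}, z ∈ MulAction.orbit H y → k • z ∈ MulAction.orbit H y := by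
    rintro k z ⟨g, rfl⟩
    exact ⟨k * g, by show (k * g) • y = k • g • y; rw [mul_smul]⟩
  have hQinv : ∀ z : X, Q z ↔ Q (h⁻¹ • z) := by
    intro z
    constructor
    · rintro ⟨hzo, n, hn⟩
      refine ⟨horb h⁻¹ hzo, n + 1, ?_⟩
      rw [zpow_add, zpow_one, mul_smul, smul_inv_smul]
      exact hn
    · rintro ⟨hzo, n, hn⟩
      have h1 : h • h⁻¹ • z = z := smul_inv_smul h z
      refine ⟨by rw [← h1]; exact horb h hzo, n - 1, ?_⟩
      rw [sub_eq_add_neg, zpow_add, mul_smul]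
      have h2 : (h : H) ^ (-1 : ℤ) • z = h⁻¹ • z := by rw [zpow_neg_one]
      rw [h2]
      exact hn
  have hrep_inv : ∀ z : X, hrep h (h⁻¹ • z) = hrep h z :=
    fun z => hrep_congr h 1 (by rw [zpow_one, smul_inv_smul])
  refine ⟨c, ?_, ?_⟩
  · -- finite support
    have hsub : mulSupport c ⊆
        ⋃ w ∈ mulSupport f ∩ MulAction.orbit H y, Set.range fun n : ℤ => h ^ n • w := by
      intro z hz
      have hQz : Q z := by
        by_contra hQz
        exact hz (hcval' z hQz)
      obtain ⟨hzo, n, hn⟩ := hQz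
      refine Set.mem_biUnion ⟨hn, horb _ hzo⟩ ⟨-n, ?_⟩
      show h ^ (-n) • h ^ n • z = z
      rw [smul_smul, ← zpow_add, neg_add_cancel, zpow_zero, one_smul]
    exact Set.Finite.subset
      (Set.Finite.biUnion (hf.inter_of_left _) fun w hw => htor w hw.2 h) hsub
  · -- the cocycle condition
    intro z hzo
    by_cases hQz : Q z
    · -- on an active orbit
      obtain ⟨-, n, hn⟩ := hQz
      have hQz : Q z := ⟨hzo, n, hn⟩
      set x₀ : X := hrep h z with hx₀
      obtain ⟨m, hm⟩ : ∃ m : ℤ, h ^ m • x₀ = z := hrep_spec h z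
      have hx₀orb : x₀ ∈ MulAction.orbit H y := by
        have hx1 : x₀ = (h ^ m)⁻¹ • z := by rw [← hm, inv_smul_smul]
        rw [hx1]; exact horb _ hzo
      have hex : ∃ d : ℕ, 0 < d ∧ h ^ (d : ℤ) • x₀ = x₀ :=
        exists_pos_period (htor x₀ hx₀orb h)
      have hrx : hrep h x₀ = x₀ := (hrep_congr h m hm).trans hx₀.symm
      set d : ℕ := hperiod h x₀ with hd
      set i : ℕ := hidx h x₀ z with hi
      obtain ⟨j, hjd, hj⟩ := index_exists hex ⟨m, hm⟩
      have hiz : h ^ (-(i : ℤ)) • x₀ = z := hidx_spec ⟨j, hj⟩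
      have hid : i < d := lt_of_le_of_lt (hidx_le ⟨j, hj⟩ hj) hjd
      -- membership of the orbit product in M (conjugated)
      have hw : h ^ n • z ∈ mulSupport f ∩ MulAction.orbit H y := ⟨hn, horb _ hzo⟩
      have hM : (u (oprod f h z))⁻¹ * oprod f h z * u (oprod f h z) ∈ M := by
        rw [oprod_congr f h n (rfl : h ^ n • z = h ^ n • z)]
        exact hu _ hw
      have hQhz : Q (h⁻¹ • z) := (hQinv z).1 hQz
      have hcz : c z = (eP f h x₀ i)⁻¹ * u (oprod f h z) := by
        rw [hcval z hQz, ← hx₀]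
      have hfz : f z = f (h ^ (-(i : ℤ)) • x₀) := by rw [hiz]
      have hpow : h⁻¹ * h ^ (-(i : ℤ)) = h ^ (-((i : ℤ) + 1)) := by
        rw [← zpow_neg_one, ← zpow_add]
        congr 1
        ring
      have hinvz : h⁻¹ • z = h ^ (-((i : ℤ) + 1)) • x₀ := by
        rw [← hiz, smul_smul, hpow]
      have hcast : -(((i + 1 : ℕ) : ℕ) : ℤ) = -((i : ℤ) + 1) := by push_cast; ring
      have hsat : h ^ (-((i + 1 : ℕ) : ℤ)) • x₀ = h⁻¹ • z := by
        rw [hcast, ← hinvz]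
      have horpr : oprod f h (h⁻¹ • z) = oprod f h z :=
        oprod_congr f h 1 (by rw [zpow_one, smul_inv_smul])
      by_cases hi1 : i + 1 < d
      · -- interior point: the cocycle value is 1
        have hidx1 : hidx h x₀ (h⁻¹ • z) = i + 1 := by
          have hle := hidx_le ⟨i + 1, hsat⟩ hsat
          have hlt : hidx h x₀ (h⁻¹ • z) < d := lt_of_le_of_lt hle hi1
          exact index_unique hex hlt hi1 ((hidx_spec ⟨i + 1, hsat⟩).trans hsat.symm)
        have hchz : c (h⁻¹ • z) = (eP f h x₀ (i + 1))⁻¹ * u (oprod f h z) := by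
          rw [hcval _ hQhz, hrep_inv z, ← hx₀, hidx1, horpr]
        rw [hcz, hchz, hfz, eP_succ]
        have : ((eP f h x₀ i)⁻¹ * u (oprod f h z))⁻¹ * f (h ^ (-(i : ℤ)) • x₀) *
            ((eP f h x₀ i * f (h ^ (-(i : ℤ)) • x₀))⁻¹ * u (oprod f h z)) = 1 := by
          group
        rw [this]
        exact one_mem M
      · -- wrap-around point: the cocycle value is a conjugate of the orbit product
        have hi1d : i + 1 = d := by omega
        have hhz : h⁻¹ • z = x₀ := by
          rw [hinvz]
          have h3 : -((i : ℤ) + 1) = (d : ℤ) * (-1) := by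
            rw [← hi1d]; push_cast; ring
          rw [h3]
          exact smul_hperiod_mul hex (-1)
        have hchz : c (h⁻¹ • z) = u (oprod f h z) := by
          rw [hcval _ hQhz, hrep_inv z, ← hx₀, horpr]
          rw [hhz, hidx_self, eP_zero, inv_one, one_mul]
        have hED : eP f h x₀ i * f (h ^ (-(i : ℤ)) • x₀) = oprod f h z := by
          rw [← eP_succ, hi1d, oprod, ← hx₀, ← hd]
        rw [hcz, hchz, hfz]
        have keyeq : ((eP f h x₀ i)⁻¹ * u (oprod f h z))⁻¹ * f (h ^ (-(i : ℤ)) • x₀) *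
            u (oprod f h z) = (u (oprod f h z))⁻¹ * oprod f h z * u (oprod f h z) := by
          rw [← hED]; group
        rw [keyeq]
        exact hM
    · -- inactive orbit: everything is trivial
      have hfz : f z = 1 := by
        by_contra hfz
        exact hQz ⟨hzo, 0, by simpa using hfz⟩
      rw [hcval' z hQz, hcval' _ (fun hq => hQz ((hQinv z).2 hq)), hfz]
      simpa using one_mem M

end Core
section Part2

variable {G H X : Type*} [Group G] [Group H] [MulAction H X]

open SemidirectProduct

lemma smul_mem_orbit' (k : H) {y z : X} (hz : z ∈ MulAction.orbit H y) :
    k • z ∈ MulAction.orbit H y := by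
  obtain ⟨g, rfl⟩ := hz
  exact ⟨k * g, by show (k * g) • y = k • g • y; rw [mul_smul]⟩

lemma conj_by_inl_left (c : WreathBase G X) (s : WreathProduct G H X) (x : X) :
    ((((inl c)⁻¹ * s * inl c).left : WreathBase G X) : X → G) x =
      ((c : X → G) x)⁻¹ * ((s.left : WreathBase G X) : X → G) x *
        (c : X → G) (s.right⁻¹ • x) := by
  simp only [mul_left, mul_right, inv_left, inv_right, left_inl, right_inl, inv_one, map_one,
    MulAut.one_apply, map_inv, one_mul, mul_one, Subgroup.coe_mul, Pi.mul_apply,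
    InvMemClass.coe_inv, Pi.inv_apply, wreathAut_apply, mul_assoc]

lemma conj_by_inl_right (c : WreathBase G X) (s : WreathProduct G H X) :
    ((inl c)⁻¹ * s * inl c).right = s.right := by simp

/-- The subgroup of the wreath product of elements whose base coordinates over the orbit of `y`
all lie in `M`. -/
def MSub (y : X) (M : Subgroup G) : Subgroup (WreathProduct G H X) where
  carrier := {w | ∀ x ∈ MulAction.orbit H y, ((w.left : WreathBase G X) : X → G) x ∈ M}
  one_mem' := by
    intro x _
    simp only [one_left, OneMemClass.coe_one, Pi.one_apply]
    exact one_mem M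
  mul_mem' := by
    intro a b ha hb x hx
    simp only [mul_left, Subgroup.coe_mul, Pi.mul_apply, wreathAut_apply]
    exact mul_mem (ha x hx) (hb _ (smul_mem_orbit' _ hx))
  inv_mem' := by
    intro a ha x hx
    simp only [inv_left, wreathAut_apply, InvMemClass.coe_inv, Pi.inv_apply, inv_inv]
    exact inv_mem (ha _ (smul_mem_orbit' _ hx))

lemma not_isFIG_wreathProduct (htt : IsTorsionType H X) (hG' : ¬ IsFIG G) :
    ¬ IsFIG (WreathProduct G H X) := by
  classical
  rintro ⟨S, hSfin, hSgen⟩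
  obtain ⟨y, htor⟩ := htt
  set T : Set G := ⋃ s ∈ S, (fun w => oprod ((s.left : WreathBase G X) : X → G) s.right w) ''
    (mulSupport ((s.left : WreathBase G X) : X → G) ∩ MulAction.orbit H y) with hT
  have hTfin : T.Finite :=
    hSfin.biUnion fun s _ => ((mem_wreathBase.1 s.left.2).inter_of_left _).image _
  have hnT : ¬ InvariablyGenerates G T := fun hig => hG' ⟨T, hTfin, hig⟩
  rw [InvariablyGenerates] at hnT
  push_neg at hnT
  obtain ⟨u, hM⟩ := hnT
  set M := Subgroup.closure ((fun t => (u t)⁻¹ * t * u t) '' T) with hMdef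
  have key : ∀ s : WreathProduct G H X, ∃ cb : WreathBase G X, s ∈ S →
      ∀ x ∈ MulAction.orbit H y,
        ((cb : X → G) x)⁻¹ * ((s.left : WreathBase G X) : X → G) x *
          (cb : X → G) (s.right⁻¹ • x) ∈ M := by
    intro s
    by_cases hs : s ∈ S
    · have hu : ∀ w ∈ mulSupport ((s.left : WreathBase G X) : X → G) ∩ MulAction.orbit H y,
          (u (oprod ((s.left : WreathBase G X) : X → G) s.right w))⁻¹ *
            oprod ((s.left : WreathBase G X) : X → G) s.right w *
            u (oprod ((s.left : WreathBase G X) : X → G) s.right w) ∈ M := by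
        intro w hw
        apply Subgroup.subset_closure
        exact ⟨oprod ((s.left : WreathBase G X) : X → G) s.right w,
          Set.mem_biUnion hs ⟨w, hw, rfl⟩, rfl⟩
      obtain ⟨c, hcfin, hcc⟩ :=
        exists_conjugator y htor _ (mem_wreathBase.1 s.left.2) s.right M u hu
      exact ⟨⟨c, hcfin⟩, fun _ => hcc⟩
    · exact ⟨1, fun h => absurd h hs⟩
  choose cb hcb using key
  have hle := hSgen fun s => inl (cb s)
  have hsub : Subgroup.closure
      ((fun s => ((inl (cb s) : WreathProduct G H X))⁻¹ * s * inl (cb s)) '' S) ≤ MSub y M := by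
    refine (Subgroup.closure_le _).2 ?_
    rintro _ ⟨s, hs, rfl⟩
    intro x hx
    rw [conj_by_inl_left]
    exact hcb s hs x hx
  rw [hle] at hsub
  apply hM
  rw [eq_top_iff]
  intro g _
  have h2 : (inl (WreathBase.single X y g) : WreathProduct G H X) ∈ MSub y M :=
    hsub trivial
  have h3 := h2 y (MulAction.mem_orbit_self y)
  simp only [left_inl, single_apply, if_pos rfl] at h3
  exact h3

end Part2


theorem stmt_0 (G H X : Type*) [Group G] [Group H] [Nontrivial G] [Nontrivial H]
    [MulAction H X] [FaithfulSMul H X] (htt : IsTorsionType H X)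
    (hH : IsFIG H) (hG : IsIG G) (hG' : ¬ IsFIG G) :
    IsIG (WreathProduct G H X) ∧ ¬ IsFIG (WreathProduct G H X) :=
  ⟨isIG_wreathProduct hH.isIG hG, not_isFIG_wreathProduct htt hG'⟩
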